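/- arXiv:2603.16005 — 5 statements merged into one kernel-verified Lean document; each statement's English description precedes it below -/
import Mathlib

section
/- Assume the cost c(x,y) = h(x−y) satisfies (H1)–(H3). Let u_1,…,u_n ∈ ℝ^d be distinct points in general position with n ≥ d, and let x_1,…,x_n ∈ ℝ^d be distinct, with Q_n the empirical measure of u_1,…,u_n. Then for every j ∈ {1,…,n}, the finite sample breakdown point of T_{Q_n→P_n}(u_j) is at most TD^−(u_j;Q_n) + 1/n. -/
open Filter MeasureTheory Bornology Topology Set
open scoped RealInnerProductSpace ENNReal BigOperators Classical

noncomputable section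

abbrev Euc (d : ℕ) := EuclideanSpace ℝ (Fin d)

/-- The cost function `c(x,y) = h(x-y)`. -/
def cost {d : ℕ} (h : Euc d → ℝ) (x y : Euc d) : ℝ := h (x - y)

/-- The truncated cone `Cone(r, θ, z, p)`. -/
def TruncCone {d : ℕ} (r θ : ℝ) (z p : Euc d) : Set (Euc d) :=
  {x | ‖x - p‖ * ‖z‖ * Real.cos (θ / 2) ≤ ⟪z, x - p⟫ ∧ ⟪z, x - p⟫ ≤ r * ‖z‖}

/-- (H1): `h` is strictly convex. -/
def H1 {d : ℕ} (h : Euc d → ℝ) : Prop := StrictConvexOn ℝ Set.univ h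

/-- (H2): for every height `r > 0` and angle `θ ∈ (0, π)` there is `M > 0` such that for every
`p` with `‖p‖ > M` there is a truncated cone with vertex `p` on which `h` attains its maximum
at `p`. -/
def H2 {d : ℕ} (h : Euc d → ℝ) : Prop :=
  ∀ r : ℝ, 0 < r → ∀ θ : ℝ, θ ∈ Set.Ioo 0 Real.pi → ∃ M : ℝ, 0 < M ∧
    ∀ p : Euc d, M < ‖p‖ → ∃ z : Euc d, z ≠ 0 ∧ ∀ x ∈ TruncCone r θ z p, h x ≤ h p

/-- (H3): `h(x)/‖x‖ → ∞` as `‖x‖ → ∞`. -/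
def H3 {d : ℕ} (h : Euc d → ℝ) : Prop :=
  ∀ C : ℝ, ∃ R : ℝ, ∀ x : Euc d, R ≤ ‖x‖ → C * ‖x‖ ≤ h x

/-- A function `f : ℝ^d → ℝ ∪ {-∞}` is `c`-concave if it is an infimum of functions
`x ↦ c(x,y) - t` over a nonempty family `𝒯` of pairs `(y,t)`. -/
def IsCConcave {d : ℕ} (h : Euc d → ℝ) (f : Euc d → EReal) : Prop :=
  ∃ T : Set (Euc d × ℝ), T.Nonempty ∧
    ∀ x : Euc d, f x = ⨅ p ∈ T, ((cost h x p.1 - p.2 : ℝ) : EReal)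

/-- The `c`-superdifferential of `f`, as a subset of `ℝ^d × ℝ^d`. -/
def CSuperdiff {d : ℕ} (h : Euc d → ℝ) (f : Euc d → EReal) : Set (Euc d × Euc d) :=
  {q | ∀ z : Euc d, f z ≤ f q.1 + ((cost h z q.2 - cost h q.1 q.2 : ℝ) : EReal)}

/-- `∂^c f(x)`. -/
def CSuperdiffAt {d : ℕ} (h : Euc d → ℝ) (f : Euc d → EReal) (x : Euc d) : Set (Euc d) :=
  {y | (x, y) ∈ CSuperdiff h f}

/-- `∂^c f(U) = ⋃_{x ∈ U} ∂^c f(x)`. -/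
def CSuperdiffImg {d : ℕ} (h : Euc d → ℝ) (f : Euc d → EReal) (U : Set (Euc d)) :
    Set (Euc d) :=
  ⋃ x ∈ U, CSuperdiffAt h f x

/-- `dom(f) = {x : f(x) > -∞}`. -/
def edom {d : ℕ} (f : Euc d → EReal) : Set (Euc d) := {x | f x ≠ ⊥}

/-- A sequence of sets escapes to the horizon if it eventually avoids every ball
`B_R(0)`. -/
def EscapesToHorizon {α : Type*} [Norm α] (A : ℕ → Set α) : Prop :=
  ∀ R : ℝ, 0 < R → ∃ N : ℕ, ∀ n, N ≤ n → ∀ a ∈ A n, R ≤ ‖a‖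

/-- No subsequence of the sequence of sets escapes to the horizon. -/
def NoSubseqEscapes {α : Type*} [Norm α] (A : ℕ → Set α) : Prop :=
  ∀ φ : ℕ → ℕ, StrictMono φ → ¬ EscapesToHorizon fun k => A (φ k)

/-- A Kantorovich potential for `(Q, P')`: a `c`-concave function `f` whose `c`-superdifferential
is `Q`-a.e. a singleton `{T x}` and whose (a.e. defined) selection `T` pushes `Q` forward
to `P'`. -/
def IsKantorovichPotential {d : ℕ} (h : Euc d → ℝ) (Q P' : Measure (Euc d))
    (f : Euc d → EReal) : Prop :=
  IsCConcave h f ∧ ∃ T : Euc d → Euc d,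
    (∀ᵐ x ∂Q, CSuperdiffAt h f x = {T x}) ∧ Measure.map T Q = P'

/-- The Tukey depth `TD(u;Q) = inf_{v ∈ S^{d-1}} Q {x : ⟨v, x-u⟩ ≤ 0}`. -/
def tukeyDepth {d : ℕ} (Q : Measure (Euc d)) (u : Euc d) : ℝ≥0∞ :=
  ⨅ v ∈ {v : Euc d | ‖v‖ = 1}, Q {x | ⟪v, x - u⟫ ≤ 0}

/-- The set `S_ε(u)` of possible values at `u` of `c`-superdifferentials of Kantorovich
potentials from `Q` to an `ε`-contamination of `P`. -/
def contamSet {d : ℕ} (h : Euc d → ℝ) (Q P : Measure (Euc d)) (ε : ℝ) (u : Euc d) :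
    Set (Euc d) :=
  {y | ∃ μ : Measure (Euc d), IsProbabilityMeasure μ ∧ ∃ f : Euc d → EReal,
    IsKantorovichPotential h Q (ENNReal.ofReal (1 - ε) • P + ENNReal.ofReal ε • μ) f ∧
    y ∈ CSuperdiffAt h f u}

/-- Breakdown point `BP(u) = inf {ε ∈ (0,1) : S_ε(u) is unbounded}`. -/
def breakdownPoint {d : ℕ} (h : Euc d → ℝ) (Q P : Measure (Euc d)) (u : Euc d) : ℝ≥0∞ :=
  ⨅ ε ∈ {ε : ℝ | 0 < ε ∧ ε < 1 ∧ ¬ IsBounded (contamSet h Q P ε u)}, ENNReal.ofReal ε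

/-- `σ` is an optimal assignment for source points `u` and target points `x`. -/
def IsOptAssign {d n : ℕ} (h : Euc d → ℝ) (u x : Fin n → Euc d)
    (σ : Equiv.Perm (Fin n)) : Prop :=
  ∀ τ : Equiv.Perm (Fin n), ∑ i, cost h (u i) (x (σ i)) ≤ ∑ i, cost h (u i) (x (τ i))

/-- The dataset `x'` shares at least `k` atoms (with multiplicity) with the dataset `x`
of distinct points. -/
def SharesAtoms {d n : ℕ} (x x' : Fin n → Euc d) (k : ℕ) : Prop :=
  ∃ s : Finset (Fin n), k ≤ s.card ∧ ∃ g : Fin n → Fin n,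
    Set.InjOn g ↑s ∧ ∀ i ∈ s, x' (g i) = x i

/-- The set of values `x'_{σ(j)}` over datasets `x'` sharing at least `n - ℓ` atoms with `x`
and optimal assignments `σ` for `(u, x')`. -/
def fsBadSet {d n : ℕ} (h : Euc d → ℝ) (u x : Fin n → Euc d) (j : Fin n) (ℓ : ℕ) :
    Set (Euc d) :=
  {y | ∃ (x' : Fin n → Euc d) (σ : Equiv.Perm (Fin n)),
    SharesAtoms x x' (n - ℓ) ∧ IsOptAssign h u x' σ ∧ y = x' (σ j)}

/-- Finite sample (replacement) breakdown point of `T_{Q_n → P_n}(u_j)`. -/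
def finiteSampleBP {d n : ℕ} (h : Euc d → ℝ) (u x : Fin n → Euc d) (j : Fin n) : ℝ :=
  ((sInf {ℓ : ℕ | 1 ≤ ℓ ∧ ℓ ≤ n ∧ ¬ IsBounded (fsBadSet h u x j ℓ)} : ℕ) : ℝ) / n

/-- Tukey depth of `a` with respect to the empirical measure of `u_1, …, u_n`. -/
def empTD {d n : ℕ} (u : Fin n → Euc d) (a : Euc d) : ℝ :=
  ⨅ v : {v : Euc d // ‖v‖ = 1},
    ((Finset.univ.filter fun i => ⟪(v : Euc d), u i - a⟫ ≤ 0).card : ℝ) / n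

/-- Lower Tukey depth of `a` with respect to the empirical measure of `u_1, …, u_n`. -/
def empTDlt {d n : ℕ} (u : Fin n → Euc d) (a : Euc d) : ℝ :=
  ⨅ v : {v : Euc d // ‖v‖ = 1},
    ((Finset.univ.filter fun i => ⟪(v : Euc d), u i - a⟫ < 0).card : ℝ) / n

/-- Points in general position: every subset of cardinality at most `d+1` is affinely
independent. -/
def InGeneralPosition {d n : ℕ} (u : Fin n → Euc d) : Prop :=
  ∀ s : Finset (Fin n), s.card ≤ d + 1 → AffineIndependent ℝ fun i : s => u (i : Fin n)

/-- Convex conjugate `h*(y) = sup_x (⟨x,y⟩ - h(x))`. -/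
def convConj {d : ℕ} (h : Euc d → ℝ) (y : Euc d) : ℝ := ⨆ x : Euc d, (⟪x, y⟫ - h x)

/-- Topological support of a measure. -/
def measSupport {d : ℕ} (Q : Measure (Euc d)) : Set (Euc d) :=
  {x | ∀ U : Set (Euc d), IsOpen U → x ∈ U → 0 < Q U}

/-- A set `Γ ⊂ ℝ^d × ℝ^d` is `c`-cyclically monotone. -/
def CCyclMono {d : ℕ} (h : Euc d → ℝ) (Γ : Set (Euc d × Euc d)) : Prop :=
  ∀ (N : ℕ) (p : Fin N → Euc d × Euc d), (∀ i, p i ∈ Γ) →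
    ∀ τ : Equiv.Perm (Fin N),
      ∑ i, cost h (p i).1 (p i).2 ≤ ∑ i, cost h (p i).1 (p (τ i)).2

lemma card_le_d_of_plane {d n : ℕ} (hd : 1 ≤ d) (v : Euc d) (hv : v ≠ 0)
    (u : Fin n → Euc d) (b : Euc d) (t : Finset (Fin n))
    (hplane : ∀ i ∈ t, ⟪v, u i - b⟫ = 0)
    (hai : AffineIndependent ℝ (fun i : t => u (i : Fin n))) : t.card ≤ d := by
  rcases Finset.eq_empty_or_nonempty t with rfl | ht
  · simp
  · have htc : 1 ≤ t.card := ht.card_pos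
    have hcard : Fintype.card t = (t.card - 1) + 1 := by
      rw [Fintype.card_coe]; omega
    have hfr := hai.finrank_vectorSpan hcard
    haveI : Fact (Module.finrank ℝ (Euc d) = (d - 1) + 1) :=
      ⟨by rw [finrank_euclideanSpace_fin]; omega⟩
    have horth := Submodule.finrank_orthogonal_span_singleton (𝕜 := ℝ) (E := Euc d) (n := d - 1) hv
    have hle : vectorSpan ℝ (Set.range fun i : t => u (i : Fin n)) ≤ (Submodule.span ℝ {v})ᗮ := by
      rw [vectorSpan_def]
      rw [Submodule.span_le]
      rintro z ⟨a, ⟨i, rfl⟩, c, ⟨k, rfl⟩, rfl⟩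
      rw [SetLike.mem_coe, Submodule.mem_orthogonal_singleton_iff_inner_right]
      have h1 := hplane i i.2
      have h2 := hplane k k.2
      show ⟪v, u (i : Fin n) -ᵥ u (k : Fin n)⟫ = 0
      have heq : u (i : Fin n) -ᵥ u (k : Fin n) = (u (i : Fin n) - b) - (u (k : Fin n) - b) := by
        rw [vsub_eq_sub]; abel
      rw [heq, inner_sub_right, h1, h2, sub_zero]
    have := Submodule.finrank_mono hle
    rw [hfr, horth] at this
    omega

lemma exists_no_tie_dir {d n : ℕ} (hd : 1 ≤ d) (u : Fin n → Euc d) (hu : Function.Injective u)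
    (hgp : InGeneralPosition u) (j : Fin n) (v₀ : Euc d) (hv₀ : ‖v₀‖ = 1) :
    ∃ v : Euc d, ‖v‖ = 1 ∧ (∀ i : Fin n, i ≠ j → ⟪v, u i - u j⟫ ≠ 0) ∧
      (Finset.univ.filter fun i => ⟪v, u i - u j⟫ < 0)
        ⊆ (Finset.univ.filter fun i => ⟪v₀, u i - u j⟫ < 0) := by
  have hv₀ne : v₀ ≠ 0 := by intro hz; rw [hz, norm_zero] at hv₀; norm_num at hv₀
  set W : Finset (Fin n) := Finset.univ.filter
    (fun i => i ≠ j ∧ ⟪v₀, u i - u j⟫ = 0) with hW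
  -- a point with positive inner product with all tie vectors
  have hsep : ∃ w : Euc d, ∀ i ∈ W, 0 < ⟪w, u i - u j⟫ := by
    rcases Finset.eq_empty_or_nonempty W with hWe | hWne
    · exact ⟨0, by simp [hWe]⟩
    -- 0 is not in the convex hull of the tie vectors
    have h0 : (0 : Euc d) ∉ convexHull ℝ (↑(W.image fun i => u i - u j) : Set (Euc d)) := by
      intro h0
      rw [Finset.convexHull_eq] at h0
      obtain ⟨wgt, hwnn, hwsum, hwcm⟩ := h0
      have hinj : Set.InjOn (fun i => u i - u j) ↑W := fun a _ b _ hab => by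
        apply hu; have := sub_left_injective hab; exact this
      have hsum' : ∑ i ∈ W, wgt (u i - u j) = 1 := by
        rw [← hwsum]
        exact (Finset.sum_image (g := fun i => u i - u j) (f := wgt)
          (fun a ha b hb hab => hinj ha hb hab)).symm
      have hcm' : ∑ i ∈ W, wgt (u i - u j) • (u i - u j) = 0 := by
        have := hwcm
        rw [Finset.centerMass_eq_of_sum_1 _ id hwsum] at this
        rw [← this]
        exact (Finset.sum_image (g := fun i => u i - u j) (f := fun y => wgt y • id y)
          (fun a ha b hb hab => hinj ha hb hab)).symm
      -- build an affine dependence on s = insert j W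
      set s : Finset (Fin n) := insert j W with hs
      have hjW : j ∉ W := by simp [hW]
      have hscard : s.card ≤ d := by
        by_contra hgt
        push_neg at hgt
        obtain ⟨t, hts, htc⟩ := Finset.exists_subset_card_eq (s := s) (n := d + 1) (by omega)
        have hai := hgp t (by omega)
        have : t.card ≤ d := by
          refine card_le_d_of_plane hd v₀ hv₀ne u (u j) t (fun i hi => ?_) hai
          rcases Finset.mem_insert.mp (hts hi) with rfl | hiW
          · simp
          · exact ((Finset.mem_filter.mp hiW).2).2
        omega
      have hai := hgp s (by omega)
      rw [affineIndependent_iff_of_fintype] at hai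
      set ω : Fin n → ℝ := fun i => if i = j then -1 else wgt (u i - u j) with hω
      have hωW : ∀ i ∈ W, ω i = wgt (u i - u j) := by
        intro i hi
        have : i ≠ j := ((Finset.mem_filter.mp hi).2).1
        simp [hω, this]
      have hsum0 : ∑ i : s, ω (i : Fin n) = 0 := by
        rw [Finset.sum_coe_sort s ω]
        rw [hs, Finset.sum_insert hjW]
        rw [Finset.sum_congr rfl hωW, hsum']
        simp [hω]
      have hvs : (Finset.univ.weightedVSub (fun i : s => u (i : Fin n))) (fun i : s => ω i) = 0 := by
        rw [Finset.weightedVSub_eq_linear_combination _ hsum0]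
        have : ∑ i : s, ω (i : Fin n) • u (i : Fin n) = ∑ i ∈ s, ω i • u i :=
          Finset.sum_coe_sort s (fun i => ω i • u i)
        rw [this, hs, Finset.sum_insert hjW]
        have h1 : ∑ i ∈ W, ω i • u i = ∑ i ∈ W, wgt (u i - u j) • u i :=
          Finset.sum_congr rfl (fun i hi => by rw [hωW i hi])
        have h2 : ∑ i ∈ W, wgt (u i - u j) • (u i - u j)
            = ∑ i ∈ W, wgt (u i - u j) • u i - (∑ i ∈ W, wgt (u i - u j)) • u j := by
          rw [Finset.sum_smul]
          rw [← Finset.sum_sub_distrib]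
          exact Finset.sum_congr rfl (fun i hi => smul_sub _ _ _)
        rw [h1]
        have h3 : ∑ i ∈ W, wgt (u i - u j) • u i = u j := by
          have := hcm'
          rw [h2, hsum', one_smul] at this
          exact sub_eq_zero.mp this
        rw [h3]
        simp [hω]
      have := hai (fun i : s => ω i) hsum0 hvs ⟨j, Finset.mem_insert_self _ _⟩
      simp [hω] at this
    -- separation
    have hcvx : Convex ℝ (convexHull ℝ (↑(W.image fun i => u i - u j) : Set (Euc d))) :=
      convex_convexHull _ _
    have hcl : IsClosed (convexHull ℝ (↑(W.image fun i => u i - u j) : Set (Euc d))) :=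
      (Set.Finite.isClosed_convexHull (𝕜 := ℝ) (hs := Finset.finite_toSet _))
    obtain ⟨f, c, hfc, hfb⟩ := geometric_hahn_banach_point_closed hcvx hcl h0
    refine ⟨(InnerProductSpace.toDual ℝ (Euc d)).symm f, fun i hi => ?_⟩
    have hb : (u i - u j) ∈ convexHull ℝ (↑(W.image fun i => u i - u j) : Set (Euc d)) :=
      subset_convexHull _ _ (by simp; exact ⟨i, hi, rfl⟩)
    have := hfb _ hb
    have hf0 : f 0 = 0 := map_zero f
    rw [InnerProductSpace.toDual_symm_apply]
    linarith [hfc]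
  obtain ⟨w, hw⟩ := hsep
  -- choose epsilon small
  have hev : ∀ᶠ ε in nhdsWithin (0:ℝ) (Set.Ioi 0),
      (∀ i : Fin n, (⟪v₀, u i - u j⟫ < 0 → ⟪v₀ + ε • w, u i - u j⟫ < 0) ∧
        (0 < ⟪v₀, u i - u j⟫ → 0 < ⟪v₀ + ε • w, u i - u j⟫)) ∧
      v₀ + ε • w ≠ 0 := by
    have hkey : ∀ i : Fin n, Filter.Tendsto (fun ε : ℝ => ⟪v₀ + ε • w, u i - u j⟫)
        (nhdsWithin (0:ℝ) (Set.Ioi 0)) (nhds ⟪v₀, u i - u j⟫) := by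
      intro i
      have hc : Continuous (fun ε : ℝ => ⟪v₀ + ε • w, u i - u j⟫) := by
        simp only [inner_add_left, real_inner_smul_left]
        exact continuous_const.add ((continuous_id.mul continuous_const))
      have := hc.tendsto (0:ℝ)
      simp only [zero_smul, add_zero] at this
      exact this.mono_left nhdsWithin_le_nhds
    refine Filter.Eventually.and ?_ ?_
    · rw [Filter.eventually_all]
      intro i
      refine Filter.Eventually.and ?_ ?_
      · rcases lt_or_ge ⟪v₀, u i - u j⟫ 0 with hlt | hge
        · exact ((hkey i).eventually_lt_const hlt).mono (fun ε h _ => h)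
        · filter_upwards with ε h; linarith
      · rcases lt_or_ge 0 ⟪v₀, u i - u j⟫ with hlt | hge
        · exact ((hkey i).eventually_const_lt hlt).mono (fun ε h _ => h)
        · filter_upwards with ε h; linarith
    · have hn : Filter.Tendsto (fun ε : ℝ => ‖v₀ + ε • w‖)
          (nhdsWithin (0:ℝ) (Set.Ioi 0)) (nhds ‖v₀‖) := by
        have hc : Continuous (fun ε : ℝ => ‖v₀ + ε • w‖) :=
          (continuous_const.add (continuous_id.smul continuous_const)).norm
        have := hc.tendsto (0:ℝ)
        simp only [zero_smul, add_zero] at this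
        exact this.mono_left nhdsWithin_le_nhds
      rw [hv₀] at hn
      have := hn.eventually_const_lt (by norm_num : (1:ℝ)/2 < 1)
      exact this.mono (fun ε h hz => by rw [hz, norm_zero] at h; linarith)
  have hpos : ∀ᶠ ε in nhdsWithin (0:ℝ) (Set.Ioi 0), (0:ℝ) < ε :=
    eventually_mem_nhdsWithin.mono (fun ε h => h)
  obtain ⟨ε, ⟨hsigns, hne⟩, hεpos⟩ := (hev.and hpos).exists
  set vε : Euc d := v₀ + ε • w with hvε
  have hWpos : ∀ i ∈ W, 0 < ⟪vε, u i - u j⟫ := by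
    intro i hi
    have h0 : ⟪v₀, u i - u j⟫ = 0 := ((Finset.mem_filter.mp hi).2).2
    rw [hvε, inner_add_left, real_inner_smul_left, h0, zero_add]
    exact mul_pos hεpos (hw i hi)
  set c : ℝ := ‖vε‖⁻¹ with hc
  have hcpos : 0 < c := by
    rw [hc]
    exact inv_pos.mpr (norm_pos_iff.mpr hne)
  refine ⟨c • vε, norm_smul_inv_norm hne, ?_, ?_⟩
  · intro i hij
    rcases lt_trichotomy ⟪v₀, u i - u j⟫ 0 with hlt | heq | hgt
    · have := (hsigns i).1 hlt
      rw [real_inner_smul_left]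
      exact ne_of_lt (mul_neg_of_pos_of_neg hcpos this)
    · have hiW : i ∈ W := by
        rw [hW, Finset.mem_filter]
        exact ⟨Finset.mem_univ _, hij, heq⟩
      have := hWpos i hiW
      rw [real_inner_smul_left]
      exact ne_of_gt (mul_pos hcpos this)
    · have := (hsigns i).2 hgt
      rw [real_inner_smul_left]
      exact ne_of_gt (mul_pos hcpos this)
  · intro i hi
    rw [Finset.mem_filter] at hi
    rw [Finset.mem_filter]
    refine ⟨Finset.mem_univ _, ?_⟩
    have hneg : ⟪vε, u i - u j⟫ < 0 := by
      have := hi.2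
      rw [real_inner_smul_left] at this
      nlinarith
    rcases lt_trichotomy ⟪v₀, u i - u j⟫ 0 with hlt | heq | hgt
    · exact hlt
    · exfalso
      by_cases hij : i = j
      · subst hij; simp at hneg
      · have hiW : i ∈ W := by
          rw [hW, Finset.mem_filter]; exact ⟨Finset.mem_univ _, hij, heq⟩
        linarith [hWpos i hiW]
    · exfalso
      linarith [(hsigns i).2 hgt]

lemma fsBadSet_unbounded {d n : ℕ} (h : Euc d → ℝ) (hpos : ∀ x, 0 ≤ h x)
    (hcont : Continuous h) (h3 : H3 h) (u x : Fin n → Euc d) (j : Fin n)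
    (v : Euc d) (hv : ‖v‖ = 1)
    (hnotie : ∀ i : Fin n, i ≠ j → ⟪v, u i - u j⟫ ≠ 0) :
    ¬ IsBounded (fsBadSet h u x j
      ((Finset.univ.filter fun i => ⟪v, u i - u j⟫ < 0).card + 1)) := by
  intro hbdd
  obtain ⟨C, hC⟩ := isBounded_iff_forall_norm_le.mp hbdd
  set Below : Finset (Fin n) := Finset.univ.filter (fun i => ⟪v, u i - u j⟫ < 0) with hBelow
  set k : ℕ := Below.card with hk
  have hjB : j ∉ Below := by simp [hBelow]
  set SIdx : Finset (Fin n) := insert j Below with hSIdx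
  have hcardS : SIdx.card = k + 1 := by
    rw [hSIdx, Finset.card_insert_of_notMem hjB, hk]
  set NB : Finset (Fin n) := Finset.univ.filter (fun i => 0 < ⟪v, u i - u j⟫) with hNB
  set B : ℝ := ∑ a : Fin n, ∑ b : Fin n, h (u a - x b) with hB
  have hBle : ∀ a b : Fin n, h (u a - x b) ≤ B := by
    intro a b
    rw [hB]
    calc h (u a - x b) ≤ ∑ b' : Fin n, h (u a - x b') :=
          Finset.single_le_sum (f := fun b' => h (u a - x b')) (fun c _ => hpos _)
            (Finset.mem_univ b)
      _ ≤ ∑ a' : Fin n, ∑ b' : Fin n, h (u a' - x b') :=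
          Finset.single_le_sum (f := fun a' => ∑ b' : Fin n, h (u a' - x b'))
            (fun c _ => Finset.sum_nonneg fun c' _ => hpos _) (Finset.mem_univ a)
  have hB0 : 0 ≤ B := by
    rw [hB]
    exact Finset.sum_nonneg fun a _ => Finset.sum_nonneg fun b _ => hpos _
  set δ : ℝ := if hNBne : NB.Nonempty then NB.inf' hNBne (fun i => ⟪v, u i - u j⟫) else 1
    with hδ
  have hδpos : 0 < δ := by
    rw [hδ]
    split_ifs with hNBne
    · rw [Finset.lt_inf'_iff]
      intro i hi
      exact (Finset.mem_filter.mp hi).2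
    · norm_num
  set t : ℝ := C + ‖u j‖ + 2 with ht
  set m : ℝ := max ((B + 1)/δ) (h (t • v)) + 1 with hm
  have hm1 : (B + 1)/δ < m := by
    rw [hm]; have := le_max_left ((B + 1)/δ) (h (t • v)); linarith
  have hm2 : h (t • v) ≤ m - 1 := by
    rw [hm]; have := le_max_right ((B + 1)/δ) (h (t • v)); linarith
  have hmpos : 0 < m := by
    have h1 : 0 < (B + 1)/δ := div_pos (by linarith) hδpos
    exact lt_trans h1 hm1
  have hmδ : B < m * δ := by
    have := (div_lt_iff₀ hδpos).mp hm1
    linarith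
  -- minimizer of the linearly perturbed cost
  set g : Euc d → ℝ := fun q => h q - m * ⟪v, q⟫ with hg
  have hgc : Continuous g := by
    apply hcont.sub
    exact continuous_const.mul (Continuous.inner continuous_const continuous_id)
  have hgt : Filter.Tendsto g (cocompact (Euc d)) atTop := by
    obtain ⟨R₀, hR₀⟩ := h3 (m + 1)
    rw [tendsto_atTop]
    intro b
    have hev : ∀ᶠ q : Euc d in cocompact (Euc d), max R₀ b ≤ ‖q‖ :=
      tendsto_norm_cocompact_atTop.eventually_ge_atTop (max R₀ b)
    refine hev.mono (fun q hq => ?_)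
    have h1 : (m + 1) * ‖q‖ ≤ h q := hR₀ q (le_trans (le_max_left _ _) hq)
    have h2 : ⟪v, q⟫ ≤ ‖q‖ := by
      have := real_inner_le_norm v q
      rw [hv] at this; simpa using this
    have h3' : b ≤ ‖q‖ := le_trans (le_max_right _ _) hq
    rw [hg]
    simp only
    nlinarith [norm_nonneg q]
  obtain ⟨p, hp⟩ := hgc.exists_forall_le hgt
  have key : ∀ z : Euc d, h p + m * ⟪v, z⟫ ≤ h (p + z) := by
    intro z
    have := hp (p + z)
    rw [hg] at this
    simp only [inner_add_right] at this
    linarith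
  have hpinner : t - 1 ≤ ⟪v, p⟫ := by
    have h1 := hp (t • v)
    rw [hg] at h1
    simp only [real_inner_smul_right] at h1
    have h2 : ⟪v, v⟫ = 1 := by
      rw [real_inner_self_eq_norm_mul_norm, hv]; norm_num
    rw [h2, mul_one] at h1
    have h3' : 0 ≤ h p := hpos p
    -- h p - m * ⟪v,p⟫ ≤ h (t•v) - m * t
    have h4 : m * t - (m - 1) ≤ m * ⟪v, p⟫ := by nlinarith
    nlinarith
  set y : Euc d := u j - p with hy
  have hynorm : C + 1 ≤ ‖y‖ := by
    have h1 : ⟪v, p⟫ ≤ ‖p‖ := by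
      have := real_inner_le_norm v p; rw [hv] at this; simpa using this
    have h2 : ‖p‖ - ‖u j‖ ≤ ‖y‖ := by
      rw [hy, norm_sub_rev]
      exact le_trans (by linarith [norm_sub_norm_le p (u j)]) (le_refl _)
    rw [ht] at hpinner
    linarith
  set x' : Fin n → Euc d := fun i => if i ∈ SIdx then y else x i with hx'
  have hshares : SharesAtoms x x' (n - (k + 1)) := by
    refine ⟨SIdxᶜ, ?_, id, fun a _ b _ hab => hab, fun i hi => ?_⟩
    · rw [Finset.card_compl, hcardS, Fintype.card_fin]
    · rw [hx']
      simp only [id]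
      rw [if_neg (Finset.mem_compl.mp hi)]
  obtain ⟨σ₀, -, hopt₀⟩ := Finset.exists_min_image Finset.univ
    (fun σ : Equiv.Perm (Fin n) => ∑ i, cost h (u i) (x' (σ i))) ⟨1, Finset.mem_univ 1⟩
  have hopt : IsOptAssign h u x' σ₀ := fun τ => hopt₀ τ (Finset.mem_univ τ)
  have hjS : σ₀ j ∈ SIdx := by
    by_contra hout
    set A : Finset (Fin n) := SIdx.image σ₀.symm with hA
    have hAmem : ∀ a : Fin n, a ∈ A ↔ σ₀ a ∈ SIdx := by
      intro a
      rw [hA, Finset.mem_image]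
      constructor
      · rintro ⟨b, hb, rfl⟩; rwa [Equiv.apply_symm_apply]
      · intro ha; exact ⟨σ₀ a, ha, by rw [Equiv.symm_apply_apply]⟩
    have hcardA : A.card = k + 1 := by
      rw [hA, Finset.card_image_of_injective _ σ₀.symm.injective, hcardS]
    have hnsub : ¬ A ⊆ Below := by
      intro hsub
      have := Finset.card_le_card hsub
      omega
    obtain ⟨i, hiA, hiB⟩ := Finset.not_subset.mp hnsub
    have hiS : σ₀ i ∈ SIdx := (hAmem i).mp hiA
    have hij : i ≠ j := by
      intro hij; rw [hij] at hiS; exact hout hiS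
    have hipos : 0 < ⟪v, u i - u j⟫ := by
      have h1 : ¬ ⟪v, u i - u j⟫ < 0 := by
        intro hlt; exact hiB (by rw [hBelow]; exact Finset.mem_filter.mpr ⟨Finset.mem_univ _, hlt⟩)
      exact lt_of_le_of_ne (not_lt.mp h1) (Ne.symm (hnotie i hij))
    have hiNB : i ∈ NB := by rw [hNB]; exact Finset.mem_filter.mpr ⟨Finset.mem_univ _, hipos⟩
    have hNBne : NB.Nonempty := ⟨i, hiNB⟩
    have hδle : δ ≤ ⟪v, u i - u j⟫ := by
      rw [hδ, dif_pos hNBne]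
      exact Finset.inf'_le _ hiNB
    -- swap permutation
    set τ : Equiv.Perm (Fin n) := σ₀ * Equiv.swap i j with hτ
    have hτi : τ i = σ₀ j := by rw [hτ]; simp [Equiv.swap_apply_left]
    have hτj : τ j = σ₀ i := by rw [hτ]; simp [Equiv.swap_apply_right]
    have hτa : ∀ a : Fin n, a ≠ i → a ≠ j → τ a = σ₀ a := by
      intro a hai haj
      rw [hτ]; simp [Equiv.swap_apply_of_ne_of_ne hai haj]
    have hcmp := hopt τ
    -- show strict improvement
    set pair : Finset (Fin n) := {i, j} with hpair
    have hsplit : ∀ ρ : Equiv.Perm (Fin n),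
        ∑ a, cost h (u a) (x' (ρ a)) =
        ∑ a ∈ Finset.univ \ pair, cost h (u a) (x' (ρ a)) +
          (cost h (u i) (x' (ρ i)) + cost h (u j) (x' (ρ j))) := by
      intro ρ
      rw [← Finset.sum_sdiff (Finset.subset_univ pair),
        Finset.sum_pair (f := fun a => cost h (u a) (x' (ρ a))) hij]
    have htail : ∑ a ∈ Finset.univ \ pair, cost h (u a) (x' (τ a)) =
        ∑ a ∈ Finset.univ \ pair, cost h (u a) (x' (σ₀ a)) := by
      refine Finset.sum_congr rfl (fun a ha => ?_)
      rw [Finset.mem_sdiff, hpair] at ha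
      have h1 : a ≠ i := fun hc => ha.2 (by simp [hc])
      have h2 : a ≠ j := fun hc => ha.2 (by simp [hc])
      rw [hτa a h1 h2]
    have hxσi : x' (σ₀ i) = y := by rw [hx']; simp only; rw [if_pos hiS]
    have hxσj : x' (σ₀ j) = x (σ₀ j) := by rw [hx']; simp only; rw [if_neg hout]
    have hcji : cost h (u j) y = h p := by
      rw [show cost h (u j) y = h (u j - y) from rfl, hy, sub_sub_cancel]
    have hciy : h p + m * ⟪v, u i - u j⟫ ≤ cost h (u i) y := by
      have h1 : u i - y = p + (u i - u j) := by rw [hy]; abel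
      rw [show cost h (u i) y = h (u i - y) from rfl, h1]
      exact key (u i - u j)
    have hmain : cost h (u i) (x' (τ i)) + cost h (u j) (x' (τ j)) <
        cost h (u i) (x' (σ₀ i)) + cost h (u j) (x' (σ₀ j)) := by
      rw [hτi, hτj, hxσi, hxσj]
      have h1 : cost h (u i) (x (σ₀ j)) ≤ B := hBle i (σ₀ j)
      have h2 : 0 ≤ cost h (u j) (x (σ₀ j)) := hpos _
      have h3' : m * δ ≤ m * ⟪v, u i - u j⟫ :=
        mul_le_mul_of_nonneg_left hδle (le_of_lt hmpos)
      have h4 := hciy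
      rw [hcji]
      linarith
    rw [hsplit τ, hsplit σ₀, htail] at hcmp
    linarith
  have hymem : y ∈ fsBadSet h u x j (k + 1) := by
    refine ⟨x', σ₀, hshares, hopt, ?_⟩
    rw [hx']; simp only; rw [if_pos hjS]
  have := hC y hymem
  linarith

/-- under general position and `n ≥ d`, the finite sample breakdown point of
`T_{Q_n→P_n}(u_j)` is at most `TD^-(u_j;Q_n) + 1/n`. -/
theorem finiteSampleBP_le_of_generalPosition (d n : ℕ) (hd : 1 ≤ d) (h : Euc d → ℝ)
    (hpos : ∀ x, 0 ≤ h x) (h1 : H1 h) (h2 : H2 h) (h3 : H3 h)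
    (u x : Fin n → Euc d) (hu : Function.Injective u) (hx : Function.Injective x)
    (hgp : InGeneralPosition u) (hn : d ≤ n) (j : Fin n) :
    finiteSampleBP h u x j ≤ empTDlt u (u j) + 1 / n := by
  have hn1 : 1 ≤ n := le_trans hd hn
  have hcont : Continuous h := by
    exact continuousOn_univ.mp (ConvexOn.continuousOn isOpen_univ h1.convexOn)
  have hmain : ∀ v₀ : Euc d, ‖v₀‖ = 1 →
      finiteSampleBP h u x j ≤
        (((Finset.univ.filter fun i => ⟪v₀, u i - u j⟫ < 0).card : ℝ)) / n + 1 / n := by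
    intro v₀ hv₀
    obtain ⟨v, hvnorm, hnotie, hsub⟩ := exists_no_tie_dir hd u hu hgp j v₀ hv₀
    set k' : ℕ := (Finset.univ.filter fun i => ⟪v, u i - u j⟫ < 0).card with hk'
    set k₀ : ℕ := (Finset.univ.filter fun i => ⟪v₀, u i - u j⟫ < 0).card with hk₀
    have hkle : k' ≤ k₀ := Finset.card_le_card hsub
    have hunb : ¬ IsBounded (fsBadSet h u x j (k' + 1)) :=
      fsBadSet_unbounded h hpos hcont h3 u x j v hvnorm hnotie
    have hk'n : k' + 1 ≤ n := by
      have hsub2 : (Finset.univ.filter fun i => ⟪v, u i - u j⟫ < 0) ⊆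
          Finset.univ.erase j := by
        intro i hi
        rw [Finset.mem_filter] at hi
        rw [Finset.mem_erase]
        refine ⟨?_, Finset.mem_univ _⟩
        intro hij
        rw [hij] at hi
        simp at hi
      have := Finset.card_le_card hsub2
      rw [Finset.card_erase_of_mem (Finset.mem_univ j), Finset.card_univ,
        Fintype.card_fin] at this
      omega
    have hmem : k' + 1 ∈ {ℓ : ℕ | 1 ≤ ℓ ∧ ℓ ≤ n ∧ ¬ IsBounded (fsBadSet h u x j ℓ)} :=
      ⟨by omega, hk'n, hunb⟩
    have hinf : sInf {ℓ : ℕ | 1 ≤ ℓ ∧ ℓ ≤ n ∧ ¬ IsBounded (fsBadSet h u x j ℓ)} ≤ k' + 1 :=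
      Nat.sInf_le hmem
    have hnpos : (0:ℝ) < n := by exact_mod_cast hn1
    unfold finiteSampleBP
    have hcast : ((sInf {ℓ : ℕ | 1 ≤ ℓ ∧ ℓ ≤ n ∧ ¬ IsBounded (fsBadSet h u x j ℓ)} : ℕ) : ℝ)
        ≤ (k₀ : ℝ) + 1 := by
      have : ((sInf {ℓ : ℕ | 1 ≤ ℓ ∧ ℓ ≤ n ∧ ¬ IsBounded (fsBadSet h u x j ℓ)} : ℕ) : ℝ)
          ≤ ((k' + 1 : ℕ) : ℝ) := by exact_mod_cast hinf
      have h2 : ((k' + 1 : ℕ) : ℝ) ≤ (k₀ : ℝ) + 1 := by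
        push_cast
        have : (k' : ℝ) ≤ (k₀ : ℝ) := by exact_mod_cast hkle
        linarith
      linarith
    rw [← add_div]
    rw [div_le_div_iff₀ hnpos hnpos]
    nlinarith
  have hne : Nonempty {v : Euc d // ‖v‖ = 1} := by
    refine ⟨⟨EuclideanSpace.single (⟨0, hd⟩ : Fin d) (1:ℝ), ?_⟩⟩
    rw [EuclideanSpace.norm_single]
    norm_num
  have hle : finiteSampleBP h u x j - 1 / n ≤ empTDlt u (u j) := by
    unfold empTDlt
    refine le_ciInf (fun vs => ?_)
    have := hmain (vs : Euc d) vs.2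
    linarith
  linarith

end
end

section
/- Let Q be a Borel probability measure on ℝ^d that is absolutely continuous with respect to Lebesgue measure, let S ⊂ ℝ^d be a closed convex set with Q(S) = 1, and let u ∈ ℝ^d satisfy TD(u;Q) > 0. Then u ∈ S. -/
open Filter MeasureTheory Bornology Topology Set
open scoped RealInnerProductSpace ENNReal BigOperators Classical

noncomputable section

/-- if `Q ≪ Leb`, `S` is closed convex with `Q(S) = 1` and `TD(u;Q) > 0`,
then `u ∈ S`. -/
theorem mem_of_tukeyDepth_pos (d : ℕ) (hd : 1 ≤ d)
    (Q : Measure (Euc d)) [IsProbabilityMeasure Q] (hQ : Q ≪ volume)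
    (S : Set (Euc d)) (hScl : IsClosed S) (hSconv : Convex ℝ S) (hQS : Q S = 1)
    (u : Euc d) (hTD : 0 < tukeyDepth Q u) :
    u ∈ S := by
  by_contra hu
  obtain ⟨f, s, hfu, hfS⟩ := geometric_hahn_banach_point_closed hSconv hScl hu
  set v : Euc d := (InnerProductSpace.toDual ℝ (Euc d)).symm f with hv
  have hfv : ∀ x : Euc d, ⟪v, x⟫ = f x := fun x => by
    rw [hv]
    exact InnerProductSpace.toDual_symm_apply (𝕜 := ℝ) (E := Euc d)
  have hvne : v ≠ 0 := by
    intro h0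
    have h1 : f u = 0 := by rw [← hfv, h0, inner_zero_left]
    have h2 : f u = 0 → False := by
      intro _
      -- S nonempty since Q S = 1 > 0
      have hSne : S.Nonempty := by
        by_contra hne
        rw [Set.not_nonempty_iff_eq_empty] at hne
        simp [hne] at hQS
      obtain ⟨b, hb⟩ := hSne
      have := hfS b hb
      have hb0 : f b = 0 := by rw [← hfv, h0, inner_zero_left]
      linarith [hfu, hb0, this]
    exact h2 h1
  set w : Euc d := ‖v‖⁻¹ • v with hw
  have hwnorm : ‖w‖ = 1 := by
    rw [hw, norm_smul, norm_inv, norm_norm, inv_mul_cancel₀ (norm_ne_zero_iff.mpr hvne)]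
  -- halfspace {x | ⟪w, x - u⟫ ≤ 0} is disjoint from S
  have hdisj : {x : Euc d | ⟪w, x - u⟫ ≤ 0} ⊆ Sᶜ := by
    intro x hx hxS
    have hfx : s < f x := hfS x hxS
    have hinner : ⟪v, x - u⟫ = f x - f u := by
      rw [inner_sub_right, hfv, hfv]
    have hpos : 0 < ⟪v, x - u⟫ := by rw [hinner]; linarith
    have : ⟪w, x - u⟫ = ‖v‖⁻¹ * ⟪v, x - u⟫ := by
      rw [hw, real_inner_smul_left]
    have hwpos : 0 < ⟪w, x - u⟫ := by
      rw [this]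
      exact mul_pos (inv_pos.mpr (norm_pos_iff.mpr hvne)) hpos
    exact absurd hx (not_le.mpr hwpos)
  have hScompl : Q Sᶜ = 0 := by
    have := prob_compl_eq_one_sub (μ := Q) hScl.measurableSet
    rw [this, hQS, tsub_self]
  have hQhalf : Q {x : Euc d | ⟪w, x - u⟫ ≤ 0} = 0 :=
    measure_mono_null hdisj hScompl
  have : tukeyDepth Q u ≤ 0 := by
    refine le_trans (iInf₂_le w hwnorm) ?_
    rw [hQhalf]
  exact absurd (lt_of_lt_of_le hTD this) (by simp)

end
end

section
/- Let d ≥ 2 and let u_1,…,u_n ∈ ℝ^d be distinct points in general position with n ≥ d. Then for every j ∈ {1,…,n} and every unit vector w ∈ S^{d−1}, there exists a unit vector v ∈ S^{d−1} such that {i : ⟨v, u_i − u_j⟩ < 0} = {i : ⟨w, u_i − u_j⟩ < 0} and j is the only index i with ⟨v, u_i − u_j⟩ = 0. -/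
open Filter MeasureTheory Bornology Topology Set
open scoped RealInnerProductSpace ENNReal BigOperators Classical

noncomputable section

lemma exists_dual_vec {d : ℕ} {ι : Type*} [Fintype ι] (b : ι → Euc d)
    (hb : LinearIndependent ℝ b) : ∃ z : Euc d, ∀ i, ⟪b i, z⟫ = 1 := by
  classical
  let L : Euc d →ₗ[ℝ] (ι → ℝ) :=
    LinearMap.pi fun i => ((innerSL ℝ (b i)) : Euc d →L[ℝ] ℝ).toLinearMap
  have hLapp : ∀ z i, L z i = ⟪b i, z⟫ := fun z i => rfl
  have hker : LinearMap.ker L ≤ (Submodule.span ℝ (Set.range b))ᗮ := by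
    intro z hz
    rw [Submodule.mem_orthogonal]
    intro x hx
    induction hx using Submodule.span_induction with
    | mem x hx => obtain ⟨i, rfl⟩ := hx; exact congrFun (LinearMap.mem_ker.mp hz) i
    | zero => simp
    | add x y _ _ hx hy => rw [inner_add_left, hx, hy]; ring
    | smul c x _ hx => rw [real_inner_smul_left, hx]; ring
  have hspan : Module.finrank ℝ (Submodule.span ℝ (Set.range b)) = Fintype.card ι :=
    finrank_span_eq_card hb
  have hrn := LinearMap.finrank_range_add_finrank_ker L
  have horth := Submodule.finrank_add_finrank_orthogonal (K := Submodule.span ℝ (Set.range b))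
  have hkerle := Submodule.finrank_mono hker
  have hrange := Submodule.finrank_le (LinearMap.range L)
  have hpi : Module.finrank ℝ (ι → ℝ) = Fintype.card ι := by simp
  have hsurj : Function.Surjective L := by
    rw [← LinearMap.range_eq_top]
    apply Submodule.eq_top_of_finrank_eq
    omega
  obtain ⟨z, hz⟩ := hsurj (fun _ => 1)
  exact ⟨z, fun i => by rw [← hLapp z i, hz]⟩

lemma linIndep_of_gp {d n : ℕ} {u : Fin n → Euc d} (hgp : InGeneralPosition u)
    (j : Fin n) (s : Finset (Fin n)) (hjs : j ∉ s) (hcard : s.card ≤ d) :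
    LinearIndependent ℝ (fun i : s => u i - u j) := by
  classical
  have hins : (insert j s).card ≤ d + 1 := by
    rw [Finset.card_insert_of_notMem hjs]; omega
  have haff := hgp _ hins
  set j0 : (insert j s : Finset (Fin n)) := ⟨j, Finset.mem_insert_self j s⟩ with hj0
  rw [affineIndependent_iff_linearIndependent_vsub ℝ _ j0] at haff
  have hinj : Function.Injective
      (fun i : s => (⟨⟨(i : Fin n), Finset.mem_insert_of_mem i.2⟩,
        by simp [hj0]; intro h; exact hjs (h ▸ i.2)⟩ :
        {x : (insert j s : Finset (Fin n)) // x ≠ j0})) := by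
    intro a b hab
    have : ((a : Fin n) : Fin n) = (b : Fin n) := congrArg (fun x => ((x.1 : (insert j s : Finset (Fin n))) : Fin n)) hab
    exact Subtype.ext this
  have := haff.comp _ hinj
  exact this

set_option maxHeartbeats 1000000 in
/-- for points in general position (`d ≥ 2`, `n ≥ d`), any halfspace direction
`w` can be perturbed to a direction `v` keeping the same strictly-negative side and whose
boundary hyperplane through `u_j` contains no other sample point. -/
theorem exists_direction_generalPosition (d n : ℕ) (hd : 2 ≤ d)
    (u : Fin n → Euc d) (hu : Function.Injective u)
    (hgp : InGeneralPosition u) (hn : d ≤ n) (j : Fin n)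
    (w : Euc d) (hw : ‖w‖ = 1) :
    ∃ v : Euc d, ‖v‖ = 1 ∧
      {i : Fin n | ⟪v, u i - u j⟫ < 0} = {i : Fin n | ⟪w, u i - u j⟫ < 0} ∧
      {i : Fin n | ⟪v, u i - u j⟫ = 0} = {j} := by
  classical
  have hw0 : w ≠ 0 := by intro h; rw [h, norm_zero] at hw; norm_num at hw
  have hdim : Module.finrank ℝ (Euc d) = d := finrank_euclideanSpace_fin
  set Z : Finset (Fin n) := Finset.univ.filter (fun i => i ≠ j ∧ ⟪w, u i - u j⟫ = 0) with hZdef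
  have hjZ : j ∉ Z := by simp [hZdef]
  have hZcard : Z.card ≤ d - 1 := by
    by_contra hc
    push_neg at hc
    obtain ⟨s', hs'Z, hs'card⟩ := Finset.exists_subset_card_eq (show d ≤ Z.card by omega)
    have hjs' : j ∉ s' := fun h => hjZ (hs'Z h)
    have hli := linIndep_of_gp hgp j s' hjs' (le_of_eq hs'card)
    have hle : Submodule.span ℝ (Set.range fun i : s' => u i - u j) ≤ (ℝ ∙ w)ᗮ := by
      rw [Submodule.span_le]
      rintro x ⟨i, rfl⟩
      rw [SetLike.mem_coe, Submodule.mem_orthogonal_singleton_iff_inner_right]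
      have := hs'Z i.2
      simp only [hZdef, Finset.mem_filter] at this
      exact this.2.2
    have h1 : Module.finrank ℝ (Submodule.span ℝ (Set.range fun i : s' => u i - u j)) = d := by
      rw [finrank_span_eq_card hli, Fintype.card_coe, hs'card]
    have h2 := Submodule.finrank_mono hle
    have h3 := Submodule.finrank_add_finrank_orthogonal (K := (ℝ ∙ w))
    have h4 : Module.finrank ℝ (ℝ ∙ w) = 1 := finrank_span_singleton hw0
    omega
  have hliZ := linIndep_of_gp hgp j Z hjZ (by omega)
  obtain ⟨z, hz⟩ := exists_dual_vec _ hliZ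
  -- find good ε
  have hev : ∀ᶠ ε : ℝ in 𝓝[>] (0:ℝ), (0:ℝ) < ε ∧ (0:ℝ) < ‖w + ε • z‖ ∧ ∀ i : Fin n,
      (0 < ⟪w, u i - u j⟫ → 0 < ⟪w + ε • z, u i - u j⟫) ∧
      (⟪w, u i - u j⟫ < 0 → ⟪w + ε • z, u i - u j⟫ < 0) := by
    have hself : ∀ᶠ ε : ℝ in 𝓝[>] (0:ℝ), (0:ℝ) < ε := eventually_mem_nhdsWithin
    refine hself.and (Filter.Eventually.and ?_ ?_)
    · have hcont : Tendsto (fun ε : ℝ => ‖w + ε • z‖) (𝓝[>] 0) (𝓝 ‖w + (0:ℝ) • z‖) := by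
        apply (Continuous.tendsto (by continuity) 0).mono_left nhdsWithin_le_nhds
      have : (0:ℝ) < ‖w + (0:ℝ) • z‖ := by simp [hw0, norm_pos_iff]
      exact hcont.eventually (eventually_gt_nhds this)
    · rw [eventually_all]
      intro i
      have hcont : Tendsto (fun ε : ℝ => ⟪w + ε • z, u i - u j⟫) (𝓝[>] 0)
          (𝓝 ⟪w + (0:ℝ) • z, u i - u j⟫) :=
        (Continuous.tendsto (by continuity) 0).mono_left nhdsWithin_le_nhds
      have h0 : ⟪w + (0:ℝ) • z, u i - u j⟫ = ⟪w, u i - u j⟫ := by simp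
      rw [h0] at hcont
      refine Filter.Eventually.and ?_ ?_
      · rcases lt_or_ge 0 ⟪w, u i - u j⟫ with h|h
        · exact (hcont.eventually (eventually_gt_nhds h)).mono (fun ε hε _ => hε)
        · exact Filter.Eventually.of_forall (fun ε h' => absurd h' (not_lt.2 h))
      · rcases lt_or_ge ⟪w, u i - u j⟫ 0 with h|h
        · exact (hcont.eventually (eventually_lt_nhds h)).mono (fun ε hε _ => hε)
        · exact Filter.Eventually.of_forall (fun ε h' => absurd h' (not_lt.2 h))
  obtain ⟨ε, hε0, hεn, hεi⟩ := hev.exists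
  set y : Euc d := w + ε • z with hy
  refine ⟨‖y‖⁻¹ • y, ?_, ?_, ?_⟩
  · rw [norm_smul]
    rw [norm_inv, Real.norm_eq_abs, abs_of_pos hεn, inv_mul_cancel₀ (ne_of_gt hεn)]
  · ext i
    simp only [Set.mem_setOf_eq, real_inner_smul_left]
    have hc : 0 < ‖y‖⁻¹ := inv_pos.mpr hεn
    constructor
    · intro hlt
      have hylt : ⟪y, u i - u j⟫ < 0 := by
        by_contra hge
        exact absurd hlt (not_lt.2 (mul_nonneg hc.le (not_lt.1 hge)))
      -- show ⟪w, u i - u j⟫ < 0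
      rcases lt_trichotomy ⟪w, u i - u j⟫ 0 with h|h|h
      · exact h
      · -- δ = 0 : either i = j or i ∈ Z
        exfalso
        by_cases hij : i = j
        · rw [hij] at hylt; simp at hylt
        · have hiZ : i ∈ Z := by
            rw [hZdef, Finset.mem_filter]
            exact ⟨Finset.mem_univ i, hij, h⟩
          have : ⟪y, u i - u j⟫ = ε := by
            rw [hy, inner_add_left, real_inner_smul_left, h,
              real_inner_comm, hz ⟨i, hiZ⟩]
            ring
          rw [this] at hylt
          exact absurd hylt (not_lt.2 hε0.le)
      · exact absurd hylt (not_lt.2 ((hεi i).1 h).le)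
    · intro h
      exact mul_neg_of_pos_of_neg hc ((hεi i).2 h)
  · ext i
    simp only [Set.mem_setOf_eq, Set.mem_singleton_iff, real_inner_smul_left]
    constructor
    · intro h0
      by_contra hij
      have hy0 : ⟪y, u i - u j⟫ = 0 :=
        (mul_eq_zero.mp h0).resolve_left (inv_ne_zero (ne_of_gt hεn))
      rcases lt_trichotomy ⟪w, u i - u j⟫ 0 with h|h|h
      · exact absurd hy0 (ne_of_lt ((hεi i).2 h))
      · have hiZ : i ∈ Z := by
          rw [hZdef, Finset.mem_filter]
          exact ⟨Finset.mem_univ i, hij, h⟩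
        have hyε : ⟪y, u i - u j⟫ = ε := by
          rw [hy, inner_add_left, real_inner_smul_left, h,
            real_inner_comm, hz ⟨i, hiZ⟩]
          ring
        rw [hyε] at hy0
        exact absurd hy0 (ne_of_gt hε0)
      · exact absurd hy0 (ne_of_gt ((hεi i).1 h))
    · intro h
      rw [h]
      simp

end
end

section
/- Let h : ℝ^d → ℝ be strictly convex with h(x)/‖x‖ → ∞ as ‖x‖ → ∞. Then the convex conjugate h* is finite and differentiable everywhere on ℝ^d, and for every z_0 ∈ ℝ^d and every unit vector v ∈ S^{d−1}, ‖∇h*(z_0 + k v)‖ → ∞ as k → ∞. -/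
open Filter MeasureTheory Bornology Topology Set
open scoped RealInnerProductSpace ENNReal BigOperators Classical

noncomputable section

namespace Stmt17

variable {d : ℕ} {h : Euc d → ℝ}

lemma cont_of_strictConvex (h1 : StrictConvexOn ℝ Set.univ h) : Continuous h := by
  rw [← continuousOn_univ]
  exact h1.convexOn.continuousOn isOpen_univ

/-- Uniform bound for maximizers: for any `K`, there is `ρ > 0` such that for all `z`
with `‖z‖ ≤ K`, any `x` with `⟪x,z⟫ - h x ≥ ⟪0,z⟫ - h 0` satisfies `‖x‖ ≤ ρ`. -/
lemma exists_unif_bound (h3 : ∀ C : ℝ, ∃ R : ℝ, ∀ x : Euc d, R ≤ ‖x‖ → C * ‖x‖ ≤ h x)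
    (K : ℝ) : ∃ ρ : ℝ, 0 < ρ ∧ ∀ z : Euc d, ‖z‖ ≤ K → ∀ x : Euc d,
      (- h 0 : ℝ) ≤ ⟪x, z⟫ - h x → ‖x‖ ≤ ρ := by
  obtain ⟨R, hR⟩ := h3 (K + 1)
  refine ⟨max R (|h 0| + 1), lt_max_of_lt_right (by positivity), fun z hz x hx => ?_⟩
  by_contra hcon
  push_neg at hcon
  have hxR : R ≤ ‖x‖ := le_of_lt (lt_of_le_of_lt (le_max_left _ _) hcon)
  have hb := hR x hxR
  have hxK : 0 ≤ ‖x‖ := norm_nonneg x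
  have hKpos : 0 ≤ K := le_trans (norm_nonneg z) hz
  have hinner : ⟪x, z⟫ ≤ ‖x‖ * K := by
    calc ⟪x, z⟫ ≤ ‖x‖ * ‖z‖ := real_inner_le_norm x z
    _ ≤ ‖x‖ * K := by nlinarith
  have : ⟪x, z⟫ - h x ≤ -‖x‖ := by nlinarith
  have h1 : |h 0| + 1 < ‖x‖ := lt_of_le_of_lt (le_max_right _ _) hcon
  have : -h 0 ≤ -‖x‖ := le_trans hx this
  have := abs_le.1 (le_refl |h 0|)
  linarith [neg_abs_le (h 0)]

/-- Existence of a maximizer of `x ↦ ⟪x,y⟫ - h x`. -/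
lemma exists_max (h1 : StrictConvexOn ℝ Set.univ h)
    (h3 : ∀ C : ℝ, ∃ R : ℝ, ∀ x : Euc d, R ≤ ‖x‖ → C * ‖x‖ ≤ h x) (y : Euc d) :
    ∃ x : Euc d, ∀ w : Euc d, ⟪w, y⟫ - h w ≤ ⟪x, y⟫ - h x := by
  obtain ⟨ρ, hρ, hbd⟩ := exists_unif_bound h3 ‖y‖
  have hcont : Continuous h := cont_of_strictConvex h1
  have hKc : IsCompact (Metric.closedBall (0 : Euc d) ρ) := isCompact_closedBall _ _
  have hne : (Metric.closedBall (0 : Euc d) ρ).Nonempty := ⟨0, by simp [le_of_lt hρ]⟩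
  have hcg : ContinuousOn (fun x : Euc d => ⟪x, y⟫ - h x) (Metric.closedBall 0 ρ) :=
    ((continuous_inner.comp (continuous_id.prodMk continuous_const)).sub hcont).continuousOn
  obtain ⟨x, hxmem, hxmax⟩ := hKc.exists_isMaxOn hne hcg
  refine ⟨x, fun w => ?_⟩
  by_cases hw : w ∈ Metric.closedBall (0 : Euc d) ρ
  · exact hxmax hw
  · -- w outside the ball: compare with 0
    have h0mem : (0 : Euc d) ∈ Metric.closedBall (0 : Euc d) ρ := by simp [le_of_lt hρ]
    have h0le : ⟪(0 : Euc d), y⟫ - h 0 ≤ ⟪x, y⟫ - h x := hxmax h0mem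
    have h0v : ⟪(0 : Euc d), y⟫ - h 0 = -h 0 := by simp
    -- if w satisfied the bound, it would be in the ball
    by_contra hcon
    push_neg at hcon
    have : (-h 0 : ℝ) ≤ ⟪w, y⟫ - h w := by
      rw [h0v] at h0le; linarith
    have := hbd y le_rfl w this
    exact hw (by simpa [Metric.mem_closedBall, dist_eq_norm] using this)

/-- The maximizer. -/
def amax (h1 : StrictConvexOn ℝ Set.univ h)
    (h3 : ∀ C : ℝ, ∃ R : ℝ, ∀ x : Euc d, R ≤ ‖x‖ → C * ‖x‖ ≤ h x) (y : Euc d) : Euc d :=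
  Classical.choose (exists_max h1 h3 y)

lemma amax_spec (h1 : StrictConvexOn ℝ Set.univ h)
    (h3 : ∀ C : ℝ, ∃ R : ℝ, ∀ x : Euc d, R ≤ ‖x‖ → C * ‖x‖ ≤ h x) (y : Euc d) :
    ∀ w : Euc d, ⟪w, y⟫ - h w ≤ ⟪amax h1 h3 y, y⟫ - h (amax h1 h3 y) :=
  Classical.choose_spec (exists_max h1 h3 y)

/-- Uniqueness of maximizers, by strict concavity. -/
lemma max_unique (h1 : StrictConvexOn ℝ Set.univ h) {y x₁ x₂ : Euc d}
    (hm1 : ∀ w : Euc d, ⟪w, y⟫ - h w ≤ ⟪x₁, y⟫ - h x₁)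
    (hm2 : ∀ w : Euc d, ⟪w, y⟫ - h w ≤ ⟪x₂, y⟫ - h x₂) : x₁ = x₂ := by
  by_contra hne
  have hmid := h1.2 (Set.mem_univ x₁) (Set.mem_univ x₂) hne
    (by norm_num : (0:ℝ) < 1/2) (by norm_num : (0:ℝ) < 1/2) (by norm_num)
  set m : Euc d := (1/2 : ℝ) • x₁ + (1/2 : ℝ) • x₂ with hm
  have hval : ⟪x₁, y⟫ - h x₁ = ⟪x₂, y⟫ - h x₂ := le_antisymm (hm2 x₁) (hm1 x₂)
  have hinner : ⟪m, y⟫ = (1/2 : ℝ) * ⟪x₁, y⟫ + (1/2 : ℝ) * ⟪x₂, y⟫ := by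
    rw [hm, inner_add_left, real_inner_smul_left, real_inner_smul_left]
  have := hm1 m
  rw [hinner] at this
  have h2 : h m < (1/2 : ℝ) * h x₁ + (1/2 : ℝ) * h x₂ := by
    simpa [smul_eq_mul] using hmid
  linarith

lemma bddAbove_range (h1 : StrictConvexOn ℝ Set.univ h)
    (h3 : ∀ C : ℝ, ∃ R : ℝ, ∀ x : Euc d, R ≤ ‖x‖ → C * ‖x‖ ≤ h x) (y : Euc d) :
    BddAbove (Set.range fun x : Euc d => ⟪x, y⟫ - h x) :=
  ⟨⟪amax h1 h3 y, y⟫ - h (amax h1 h3 y), by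
    rintro _ ⟨w, rfl⟩; exact amax_spec h1 h3 y w⟩

lemma convConj_eq (h1 : StrictConvexOn ℝ Set.univ h)
    (h3 : ∀ C : ℝ, ∃ R : ℝ, ∀ x : Euc d, R ≤ ‖x‖ → C * ‖x‖ ≤ h x) (y : Euc d) :
    convConj h y = ⟪amax h1 h3 y, y⟫ - h (amax h1 h3 y) := by
  refine le_antisymm (ciSup_le fun w => amax_spec h1 h3 y w) ?_
  exact le_ciSup (bddAbove_range h1 h3 y) (amax h1 h3 y)

/-- Continuity of the maximizer map. -/
lemma amax_continuousAt (h1 : StrictConvexOn ℝ Set.univ h)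
    (h3 : ∀ C : ℝ, ∃ R : ℝ, ∀ x : Euc d, R ≤ ‖x‖ → C * ‖x‖ ≤ h x) (y : Euc d) :
    Tendsto (amax h1 h3) (𝓝 y) (𝓝 (amax h1 h3 y)) := by
  have hcont : Continuous h := cont_of_strictConvex h1
  obtain ⟨ρ, hρ, hbd⟩ := exists_unif_bound h3 (‖y‖ + 1)
  rw [Metric.tendsto_nhds_nhds]
  by_contra hc
  push_neg at hc
  obtain ⟨ε, hε, hc⟩ := hc
  -- build a sequence z n → y with dist (amax z n) (amax y) ≥ ε
  have hseq : ∀ n : ℕ, ∃ z : Euc d, dist z y < 1 / (n + 1) ∧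
      ε ≤ dist (amax h1 h3 z) (amax h1 h3 y) := by
    intro n
    obtain ⟨z, hz1, hz2⟩ := hc (1 / (n + 1)) (by positivity)
    exact ⟨z, hz1, hz2⟩
  choose z hz1 hz2 using hseq
  have hzy : Tendsto z atTop (𝓝 y) := by
    rw [tendsto_iff_dist_tendsto_zero]
    exact squeeze_zero (fun n => dist_nonneg) (fun n => le_of_lt (hz1 n))
      tendsto_one_div_add_atTop_nhds_zero_nat
  -- amax (z n) lies in the compact ball of radius ρ
  have hmem : ∀ᶠ n in atTop, amax h1 h3 (z n) ∈ Metric.closedBall (0 : Euc d) ρ := by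
    have : ∀ᶠ n in atTop, ‖z n‖ ≤ ‖y‖ + 1 := by
      have hb : ∀ᶠ n in atTop, dist (z n) y < 1 := by
        have hm := hzy (Metric.ball_mem_nhds y one_pos)
        filter_upwards [hm] with n hn
        simpa [Metric.mem_ball] using hn
      exact hb.mono fun n hn => by
        have := norm_sub_norm_le (z n) y
        rw [dist_eq_norm] at hn
        linarith [(norm_sub_norm_le (z n) y).trans (le_of_lt hn)]
    refine this.mono fun n hn => ?_
    have hle : (-h 0 : ℝ) ≤ ⟪amax h1 h3 (z n), z n⟫ - h (amax h1 h3 (z n)) := by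
      have := amax_spec h1 h3 (z n) 0
      simpa using this
    simpa [Metric.mem_closedBall, dist_eq_norm] using hbd (z n) hn _ hle
  obtain ⟨N, hN⟩ := eventually_atTop.1 hmem
  -- extract convergent subsequence of amax (z (n + N))
  set w : ℕ → Euc d := fun n => amax h1 h3 (z (n + N)) with hw
  have hwmem : ∀ n, w n ∈ Metric.closedBall (0 : Euc d) ρ := fun n => hN _ (Nat.le_add_left N n)
  obtain ⟨x', _, φ, hφ, hxlim⟩ := (isCompact_closedBall (0 : Euc d) ρ).tendsto_subseq hwmem
  have hzlim : Tendsto (fun n => z (φ n + N)) atTop (𝓝 y) :=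
    hzy.comp ((tendsto_add_atTop_nat N).comp hφ.tendsto_atTop)
  -- x' is a maximizer for y
  have hx'max : ∀ v : Euc d, ⟪v, y⟫ - h v ≤ ⟪x', y⟫ - h x' := by
    intro v
    have hle : ∀ n, ⟪v, z (φ n + N)⟫ - h v ≤
        ⟪w (φ n), z (φ n + N)⟫ - h (w (φ n)) := fun n => amax_spec h1 h3 _ v
    have hL : Tendsto (fun n => ⟪v, z (φ n + N)⟫ - h v) atTop (𝓝 (⟪v, y⟫ - h v)) := by
      exact ((continuous_inner.comp (continuous_const.prodMk continuous_id)).tendsto y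
        |>.comp hzlim).sub tendsto_const_nhds
    have hR : Tendsto (fun n => ⟪w (φ n), z (φ n + N)⟫ - h (w (φ n))) atTop
        (𝓝 (⟪x', y⟫ - h x')) := by
      have h1' : Tendsto (fun n => (w (φ n), z (φ n + N))) atTop (𝓝 (x', y)) :=
        hxlim.prodMk_nhds hzlim
      exact ((continuous_inner.tendsto (x', y)).comp h1').sub ((hcont.tendsto x').comp hxlim)
    exact le_of_tendsto_of_tendsto' hL hR hle
  have : x' = amax h1 h3 y := max_unique h1 hx'max (amax_spec h1 h3 y)
  -- contradiction with dist ≥ ε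
  have hd : Tendsto (fun n => dist (w (φ n)) (amax h1 h3 y)) atTop (𝓝 0) := by
    rw [← this]
    exact tendsto_iff_dist_tendsto_zero.1 hxlim
  have hεle : ∀ n, ε ≤ dist (w (φ n)) (amax h1 h3 y) := fun n => hz2 _
  have := ge_of_tendsto hd (Eventually.of_forall hεle)
  linarith

/-- `convConj h` has gradient `amax y` at `y`. -/
lemma hasGradientAt_convConj (h1 : StrictConvexOn ℝ Set.univ h)
    (h3 : ∀ C : ℝ, ∃ R : ℝ, ∀ x : Euc d, R ≤ ‖x‖ → C * ‖x‖ ≤ h x) (y : Euc d) :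
    HasGradientAt (convConj h) (amax h1 h3 y) y := by
  rw [hasGradientAt_iff_isLittleO, Asymptotics.isLittleO_iff]
  intro c hc
  have hcont := amax_continuousAt h1 h3 y
  have hev : ∀ᶠ z in 𝓝 y, ‖amax h1 h3 z - amax h1 h3 y‖ < c := by
    have hn : Tendsto (fun z => ‖amax h1 h3 z - amax h1 h3 y‖) (𝓝 y) (𝓝 0) :=
      tendsto_iff_norm_sub_tendsto_zero.1 hcont
    exact hn.eventually_lt_const hc
  refine hev.mono fun z hz => ?_
  set xy := amax h1 h3 y
  set xz := amax h1 h3 z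
  have hfy : convConj h y = ⟪xy, y⟫ - h xy := convConj_eq h1 h3 y
  have hfz : convConj h z = ⟪xz, z⟫ - h xz := convConj_eq h1 h3 z
  have hlow : 0 ≤ convConj h z - convConj h y - ⟪xy, z - y⟫ := by
    have := amax_spec h1 h3 z xy
    rw [hfz, hfy, inner_sub_right]
    linarith
  have hup : convConj h z - convConj h y - ⟪xy, z - y⟫ ≤ ‖xz - xy‖ * ‖z - y‖ := by
    have h2 := amax_spec h1 h3 y xz
    have h3' : ⟪xz - xy, z - y⟫ ≤ ‖xz - xy‖ * ‖z - y‖ := real_inner_le_norm _ _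
    rw [inner_sub_left, inner_sub_right, inner_sub_right] at h3'
    rw [hfz, hfy, inner_sub_right]
    linarith
  rw [Real.norm_eq_abs, abs_of_nonneg hlow]
  calc convConj h z - convConj h y - ⟪xy, z - y⟫ ≤ ‖xz - xy‖ * ‖z - y‖ := hup
    _ ≤ c * ‖z - y‖ := by
        apply mul_le_mul_of_nonneg_right (le_of_lt hz) (norm_nonneg _)

lemma gradient_eq (h1 : StrictConvexOn ℝ Set.univ h)
    (h3 : ∀ C : ℝ, ∃ R : ℝ, ∀ x : Euc d, R ≤ ‖x‖ → C * ‖x‖ ≤ h x) (y : Euc d) :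
    gradient (convConj h) y = amax h1 h3 y :=
  (hasGradientAt_convConj h1 h3 y).gradient

end Stmt17

/-- for `h` strictly convex and superlinear, the convex conjugate `h*` is finite
and differentiable everywhere, and `‖∇h*(z₀ + k v)‖ → ∞` as `k → ∞` for any unit `v`. -/
theorem convConj_differentiable_and_gradient_tendsto (d : ℕ) (h : Euc d → ℝ)
    (h1 : StrictConvexOn ℝ Set.univ h)
    (h3 : ∀ C : ℝ, ∃ R : ℝ, ∀ x : Euc d, R ≤ ‖x‖ → C * ‖x‖ ≤ h x) :
    (∀ y : Euc d, BddAbove (Set.range fun x : Euc d => ⟪x, y⟫ - h x)) ∧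
    Differentiable ℝ (convConj h) ∧
    ∀ z₀ v : Euc d, ‖v‖ = 1 →
      Tendsto (fun k : ℕ => ‖gradient (convConj h) (z₀ + (k : ℝ) • v)‖) atTop atTop := by
  refine ⟨Stmt17.bddAbove_range h1 h3, fun y =>
    (Stmt17.hasGradientAt_convConj h1 h3 y).differentiableAt, ?_⟩
  intro z₀ v hv
  rw [tendsto_atTop_atTop]
  intro B
  set B' := max B 0 with hB'
  have hB'0 : 0 ≤ B' := le_max_right _ _
  -- min of h on closed ball of radius B'
  have hcont := Stmt17.cont_of_strictConvex h1
  obtain ⟨x₀, _, hmin⟩ := (isCompact_closedBall (0 : Euc d) B').exists_isMinOn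
    ⟨0, by simp [hB'0]⟩ hcont.continuousOn
  set m₀ := h x₀ with hm₀
  -- constants
  set c₁ : ℝ := (B' + 1) * ⟪v, z₀⟫ - h ((B' + 1) • v) with hc₁
  set c₂ : ℝ := B' * ‖z₀‖ - m₀ with hc₂
  obtain ⟨K, hK⟩ := exists_nat_gt (c₂ - c₁)
  refine ⟨K, fun k hk => ?_⟩
  set z := z₀ + (k : ℝ) • v with hzdef
  rw [Stmt17.gradient_eq h1 h3]
  set xz := Stmt17.amax h1 h3 z with hxz
  by_contra hcon
  push_neg at hcon
  have hxzB : ‖xz‖ ≤ B' := le_trans (le_of_lt hcon) (le_max_left _ _)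
  -- upper bound on convConj h z
  have hupper : convConj h z ≤ B' * (k : ℝ) + c₂ := by
    rw [Stmt17.convConj_eq h1 h3]
    have hi : ⟪xz, z⟫ ≤ ‖xz‖ * ‖z‖ := real_inner_le_norm _ _
    have hz_norm : ‖z‖ ≤ ‖z₀‖ + (k : ℝ) := by
      calc ‖z‖ ≤ ‖z₀‖ + ‖(k : ℝ) • v‖ := norm_add_le _ _
      _ = ‖z₀‖ + (k : ℝ) := by
          rw [norm_smul, hv]; simp [abs_of_nonneg (by positivity : (0:ℝ) ≤ (k:ℝ))]
    have hm : m₀ ≤ h xz := hmin (by simpa [Metric.mem_closedBall, dist_eq_norm] using hxzB)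
    have : ‖xz‖ * ‖z‖ ≤ B' * (‖z₀‖ + (k:ℝ)) := by
      apply mul_le_mul hxzB hz_norm (norm_nonneg _) hB'0
    rw [hc₂]
    nlinarith
  -- lower bound
  have hlower : (B' + 1) * (k : ℝ) + c₁ ≤ convConj h z := by
    have := Stmt17.amax_spec h1 h3 z ((B' + 1) • v)
    rw [← Stmt17.convConj_eq h1 h3] at this
    have hi : ⟪(B' + 1) • v, z⟫ = (B' + 1) * ⟪v, z₀⟫ + (B' + 1) * (k : ℝ) := by
      rw [hzdef, inner_add_right, real_inner_smul_left, real_inner_smul_left,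
        real_inner_smul_right, real_inner_self_eq_norm_sq, hv]
      ring
    rw [hi] at this
    rw [hc₁]
    linarith
  have hkK : (c₂ - c₁ : ℝ) < (k : ℝ) := lt_of_lt_of_le hK (Nat.cast_le.2 hk)
  linarith

end
end

section
/- Assume the cost c(x,y) = h(x−y) satisfies (H1)–(H3). Let Q be a Borel probability measure on ℝ^d absolutely continuous with respect to Lebesgue measure, P a Borel probability measure on ℝ^d, ε ∈ (0,1), z ∈ ℝ^d, and let f be a Kantorovich potential for (Q, (1−ε)P + ε δ_z). Then the set (∂^c f)^{−1}(z) = {x ∈ ℝ^d : z ∈ ∂^c f(x)} has Q-measure at least ε. -/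
open Filter MeasureTheory Bornology Topology Set
open scoped RealInnerProductSpace ENNReal BigOperators Classical

noncomputable section

/-- if `f` is a Kantorovich potential for `(Q, (1-ε)P + ε δ_z)`, then
`{x : z ∈ ∂^c f(x)}` has `Q`-measure at least `ε`. -/
theorem measure_preimage_dirac_ge (d : ℕ) (hd : 1 ≤ d) (h : Euc d → ℝ)
    (hpos : ∀ x, 0 ≤ h x) (h1 : H1 h) (h2 : H2 h) (h3 : H3 h)
    (Q P : Measure (Euc d)) [IsProbabilityMeasure Q] [IsProbabilityMeasure P]
    (hQ : Q ≪ volume) (ε : ℝ) (hε : ε ∈ Set.Ioo (0 : ℝ) 1) (z : Euc d)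
    (f : Euc d → EReal)
    (hf : IsKantorovichPotential h Q
      (ENNReal.ofReal (1 - ε) • P + ENNReal.ofReal ε • Measure.dirac z) f) :
    ENNReal.ofReal ε ≤ Q {x | z ∈ CSuperdiffAt h f x} := by
  obtain ⟨-, T, hae, hmap⟩ := hf
  -- the contaminated measure puts mass ≥ ε on {z}
  have hz : ENNReal.ofReal ε ≤
      (ENNReal.ofReal (1 - ε) • P + ENNReal.ofReal ε • Measure.dirac z) {z} := by
    have : (ENNReal.ofReal ε • Measure.dirac z) {z} = ENNReal.ofReal ε := by
      simp [Measure.smul_apply]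
    calc ENNReal.ofReal ε = (ENNReal.ofReal ε • Measure.dirac z) {z} := this.symm
      _ ≤ _ := by
          simp only [Measure.add_apply]
          exact le_add_self
  -- T is a.e.-measurable, else the pushforward would be zero
  have hTmeas : AEMeasurable T Q := by
    by_contra hc
    rw [Measure.map_of_not_aemeasurable hc] at hmap
    rw [← hmap] at hz
    simp only [Measure.coe_zero, Pi.zero_apply, nonpos_iff_eq_zero,
      ENNReal.ofReal_eq_zero] at hz
    linarith [hε.1]
  have hpre : ENNReal.ofReal ε ≤ Q (T ⁻¹' {z}) := by
    rw [← Measure.map_apply_of_aemeasurable hTmeas (measurableSet_singleton z), hmap]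
    exact hz
  refine le_trans hpre (measure_mono_ae ?_)
  filter_upwards [hae] with x hx hxz
  have : T x = z := hxz
  show z ∈ CSuperdiffAt h f x
  rw [hx, ← this]
  rfl

end
end
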